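/- For any bounded operator X on a complex Hilbert space, w²(X) ≤ (1/2)·‖X*X + XX*‖. -/

import Mathlib

open scoped InnerProductSpace

/-- Numerical radius of a bounded operator on a complex Hilbert space. -/
noncomputable def numRad {H : Type*} [NormedAddCommGroup H] [InnerProductSpace ℂ H]
    (T : H →L[ℂ] H) : ℝ :=
  ⨆ z : {z : H // ‖z‖ = 1}, ‖(⟪T z.1, z.1⟫_ℂ : ℂ)‖

/-- Crawford number. -/
noncomputable def crawford {H : Type*} [NormedAddCommGroup H] [InnerProductSpace ℂ H]
    (T : H →L[ℂ] H) : ℝ :=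
  ⨅ z : {z : H // ‖z‖ = 1}, ‖(⟪T z.1, z.1⟫_ℂ : ℂ)‖

/-- The 2×2 block operator matrix `[[A, B], [C, D]]` acting on `H ⊕ H`
(the ℓ² direct sum `WithLp 2 (H × H)`), sending `(x, y)` to `(Ax + By, Cx + Dy)`. -/
noncomputable def blk {H : Type*} [NormedAddCommGroup H] [InnerProductSpace ℂ H]
    (A B C D : H →L[ℂ] H) : WithLp 2 (H × H) →L[ℂ] WithLp 2 (H × H) :=
  (((WithLp.prodContinuousLinearEquiv 2 ℂ H H).symm.toContinuousLinearMap).comp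
    (((A.comp (ContinuousLinearMap.fst ℂ H H) + B.comp (ContinuousLinearMap.snd ℂ H H)).prod
      (C.comp (ContinuousLinearMap.fst ℂ H H) + D.comp (ContinuousLinearMap.snd ℂ H H))))).comp
    ((WithLp.prodContinuousLinearEquiv 2 ℂ H H).toContinuousLinearMap)


lemma key_ineq {H : Type*} [NormedAddCommGroup H] [InnerProductSpace ℂ H]
    [CompleteSpace H] (X : H →L[ℂ] H) (z : H) (hz : ‖z‖ = 1) :
    ‖(⟪X z, z⟫_ℂ : ℂ)‖ ^ 2 ≤ (1 / 2) * ‖star X * X + X * star X‖ := by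
  set Y := ContinuousLinearMap.adjoint X with hY
  set c : ℂ := ⟪X z, z⟫_ℂ with hc
  have hvz : ⟪Y z, z⟫_ℂ = starRingEnd ℂ c := by
    rw [hY, ContinuousLinearMap.adjoint_inner_left, hc, ← inner_conj_symm]
  have hnc : ‖c‖ ^ 2 = c.re ^ 2 + c.im ^ 2 := by
    rw [Complex.sq_norm, Complex.normSq_apply]; ring
  have h1 : (2 * c.re) ^ 2 ≤ ‖X z + Y z‖ ^ 2 := by
    have e : ⟪X z + Y z, z⟫_ℂ = (2 * c.re : ℝ) := by
      rw [inner_add_left, hvz, ← hc, Complex.add_conj]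
    have h2 : ‖(⟪X z + Y z, z⟫_ℂ : ℂ)‖ ≤ ‖X z + Y z‖ := by
      calc ‖(⟪X z + Y z, z⟫_ℂ : ℂ)‖ ≤ ‖X z + Y z‖ * ‖z‖ := norm_inner_le_norm _ _
        _ = ‖X z + Y z‖ := by rw [hz, mul_one]
    rw [e] at h2
    have en : ‖((2 * c.re : ℝ) : ℂ)‖ = |2 * c.re| := by
      simp [Complex.norm_real, abs_mul]
    rw [en] at h2
    calc (2 * c.re) ^ 2 = |2 * c.re| ^ 2 := (sq_abs _).symm
      _ ≤ ‖X z + Y z‖ ^ 2 := pow_le_pow_left₀ (abs_nonneg _) h2 2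
  have h2 : (2 * c.im) ^ 2 ≤ ‖X z - Y z‖ ^ 2 := by
    have e : ⟪X z - Y z, z⟫_ℂ = (2 * c.im : ℝ) * Complex.I := by
      rw [inner_sub_left, hvz, ← hc, Complex.sub_conj]
    have h2' : ‖(⟪X z - Y z, z⟫_ℂ : ℂ)‖ ≤ ‖X z - Y z‖ := by
      calc ‖(⟪X z - Y z, z⟫_ℂ : ℂ)‖ ≤ ‖X z - Y z‖ * ‖z‖ := norm_inner_le_norm _ _
        _ = ‖X z - Y z‖ := by rw [hz, mul_one]
    rw [e] at h2'
    have en : ‖((2 * c.im : ℝ) : ℂ) * Complex.I‖ = |2 * c.im| := by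
      simp [Complex.norm_real, abs_mul]
    rw [en] at h2'
    calc (2 * c.im) ^ 2 = |2 * c.im| ^ 2 := (sq_abs _).symm
      _ ≤ ‖X z - Y z‖ ^ 2 := pow_le_pow_left₀ (abs_nonneg _) h2' 2
  have hpar : ‖X z + Y z‖ ^ 2 + ‖X z - Y z‖ ^ 2 = 2 * (‖X z‖ ^ 2 + ‖Y z‖ ^ 2) := by
    have := parallelogram_law_with_norm ℂ (X z) (Y z)
    nlinarith [this]
  have hsum : ‖X z‖ ^ 2 + ‖Y z‖ ^ 2 ≤ ‖star X * X + X * star X‖ := by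
    have e : ⟪(star X * X + X * star X) z, z⟫_ℂ = ⟪X z, X z⟫_ℂ + ⟪Y z, Y z⟫_ℂ := by
      simp [ContinuousLinearMap.star_eq_adjoint, ContinuousLinearMap.add_apply,
        ContinuousLinearMap.mul_apply, inner_add_left,
        ContinuousLinearMap.adjoint_inner_left, ContinuousLinearMap.adjoint_inner_right, hY]
      rw [← ContinuousLinearMap.adjoint_inner_right]
      exact inner_self_eq_norm_sq_to_K _
    have hre : (⟪(star X * X + X * star X) z, z⟫_ℂ).re = ‖X z‖ ^ 2 + ‖Y z‖ ^ 2 := by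
      rw [e]
      simp [inner_self_eq_norm_sq_to_K, ← Complex.ofReal_pow]
    have hb : (⟪(star X * X + X * star X) z, z⟫_ℂ).re ≤ ‖star X * X + X * star X‖ := by
      calc (⟪(star X * X + X * star X) z, z⟫_ℂ).re
          ≤ ‖(⟪(star X * X + X * star X) z, z⟫_ℂ : ℂ)‖ := Complex.re_le_norm _
        _ ≤ ‖(star X * X + X * star X) z‖ * ‖z‖ := norm_inner_le_norm _ _
        _ ≤ ‖star X * X + X * star X‖ * ‖z‖ * ‖z‖ := by
            gcongr; exact ContinuousLinearMap.le_opNorm _ _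
        _ = ‖star X * X + X * star X‖ := by rw [hz]; ring
    linarith [hre ▸ hb]
  nlinarith [hnc, h1, h2, hpar, hsum]

theorem numRad_sq_le_half' {H : Type*} [NormedAddCommGroup H] [InnerProductSpace ℂ H]
    [CompleteSpace H] (X : H →L[ℂ] H) :
    (⨆ z : {z : H // ‖z‖ = 1}, ‖(⟪X z.1, z.1⟫_ℂ : ℂ)‖) ^ 2
      ≤ (1 / 2) * ‖star X * X + X * star X‖ := by
  set c := (1 / 2) * ‖star X * X + X * star X‖ with hcdef
  have hc0 : 0 ≤ c := by positivity
  rcases isEmpty_or_nonempty {z : H // ‖z‖ = 1} with he | hn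
  · rw [Real.iSup_of_isEmpty]
    simpa using hc0
  · have hb : ∀ z : {z : H // ‖z‖ = 1}, ‖(⟪X z.1, z.1⟫_ℂ : ℂ)‖ ≤ Real.sqrt c := by
      intro z
      rw [← Real.sqrt_sq (norm_nonneg _)]
      exact Real.sqrt_le_sqrt (key_ineq X z.1 z.2)
    have hle : (⨆ z : {z : H // ‖z‖ = 1}, ‖(⟪X z.1, z.1⟫_ℂ : ℂ)‖) ≤ Real.sqrt c :=
      ciSup_le hb
    have hnn : 0 ≤ ⨆ z : {z : H // ‖z‖ = 1}, ‖(⟪X z.1, z.1⟫_ℂ : ℂ)‖ := by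
      obtain ⟨z⟩ := hn
      exact le_trans (norm_nonneg _) (le_ciSup ⟨Real.sqrt c, Set.forall_mem_range.2 hb⟩ z)
    calc (⨆ z : {z : H // ‖z‖ = 1}, ‖(⟪X z.1, z.1⟫_ℂ : ℂ)‖) ^ 2
        ≤ Real.sqrt c ^ 2 := pow_le_pow_left₀ hnn hle 2
      _ = c := Real.sq_sqrt hc0

theorem numRad_sq_le_half {H : Type*} [NormedAddCommGroup H] [InnerProductSpace ℂ H]
    [CompleteSpace H] (X : H →L[ℂ] H) :
    numRad X ^ 2 ≤ (1 / 2) * ‖star X * X + X * star X‖ := by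
  unfold numRad
  exact numRad_sq_le_half' X
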